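/- arXiv:1802.08700 — 2 statements merged into one kernel-verified Lean document; each statement's English description precedes it below -/
import Mathlib

section
/- For all natural numbers b, c and j ≥ 1: if m is the j-th gap in b ⊕ c, then N(j − 1, b, c) ≥ m. -/
/-- Sprague–Grundy value of the Auxiliary Nim game `(*a) ⊞ ((*b) ⊕ (*c))`:
the mex of the Sprague–Grundy values of the one-move successors, which are
`(a',b,c)` with `a' < a`, `(a,b',c)` with `b' < b`, `(a,b,c')` with `c' < c`,
`(a',b',c)` with `a' < a, b' < b`, and `(a',b,c')` with `a' < a, c' < c`. -/
noncomputable def N3 (a b c : ℕ) : ℕ :=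
  sInf {m : ℕ |
    (∀ a', a' < a → N3 a' b c ≠ m) ∧
    (∀ b', b' < b → N3 a b' c ≠ m) ∧
    (∀ c', c' < c → N3 a b c' ≠ m) ∧
    (∀ a', a' < a → ∀ b', b' < b → N3 a' b' c ≠ m) ∧
    (∀ a', a' < a → ∀ c', c' < c → N3 a' b c' ≠ m)}
termination_by a + b + c
decreasing_by all_goals omega

/-- `m` is a gap in `b ⊕ c`: either `m = b ^^^ c`, or, at the largest bit
index `i` where `m` and `b ^^^ c` differ, `m` has bit `1` while `b` and `c`
both have bit `0`. -/
def IsGap (b c m : ℕ) : Prop :=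
  m = b ^^^ c ∨
  ∃ i : ℕ, (∀ j, i < j → m.testBit j = (b ^^^ c).testBit j) ∧
    m.testBit i ≠ (b ^^^ c).testBit i ∧
    m.testBit i = true ∧ b.testBit i = false ∧ c.testBit i = false


/-- The defining property of being a "non successor value". -/
def Good (a b c m : ℕ) : Prop :=
    (∀ a', a' < a → N3 a' b c ≠ m) ∧
    (∀ b', b' < b → N3 a b' c ≠ m) ∧
    (∀ c', c' < c → N3 a b c' ≠ m) ∧
    (∀ a', a' < a → ∀ b', b' < b → N3 a' b' c ≠ m) ∧
    (∀ a', a' < a → ∀ c', c' < c → N3 a' b c' ≠ m)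

theorem N3_eq (a b c : ℕ) : N3 a b c = sInf {m | Good a b c m} := by
  rw [N3]; rfl

theorem good_exists (a b c : ℕ) : ∃ m, Good a b c m := by
  classical
  set F := (Finset.range (a+1) ×ˢ Finset.range (b+1) ×ˢ Finset.range (c+1)).sup
    (fun p => N3 p.1 p.2.1 p.2.2) with hF
  have key : ∀ x y z, x ≤ a → y ≤ b → z ≤ c → N3 x y z ≤ F := by
    intro x y z hx hy hz
    apply Finset.le_sup (f := fun p : ℕ × ℕ × ℕ => N3 p.1 p.2.1 p.2.2)
      (b := (x, y, z))
    simp [Finset.mem_product, Nat.lt_succ_iff, hx, hy, hz]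
  refine ⟨F + 1, ?_, ?_, ?_, ?_, ?_⟩
  · intro u hu; have := key u b c (by omega) le_rfl le_rfl; omega
  · intro u hu; have := key a u c le_rfl (by omega) le_rfl; omega
  · intro u hu; have := key a b u le_rfl le_rfl (by omega); omega
  · intro u hu w hw; have := key u w c (by omega) (by omega) le_rfl; omega
  · intro u hu w hw; have := key u b w (by omega) le_rfl (by omega); omega

theorem good_N3 (a b c : ℕ) : Good a b c (N3 a b c) := by
  have h := Nat.sInf_mem (s := {m | Good a b c m}) ⟨_, (good_exists a b c).choose_spec⟩
  rw [N3_eq]; exact h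

theorem N3_le_of_good {a b c m : ℕ} (h : Good a b c m) : N3 a b c ≤ m := by
  rw [N3_eq]; exact Nat.sInf_le h

theorem not_good_of_lt {a b c v : ℕ} (h : v < N3 a b c) : ¬ Good a b c v := by
  rw [N3_eq] at h; exact Nat.notMem_of_lt_sInf h

theorem N3_mono {a' a b c : ℕ} (h : a' < a) : N3 a' b c < N3 a b c := by
  have h1 := good_N3 a b c
  have hne : N3 a' b c ≠ N3 a b c := h1.1 a' h
  rcases lt_or_gt_of_ne hne with h2 | h2
  · exact h2
  exfalso
  apply not_good_of_lt h2
  refine ⟨?_, ?_, ?_, ?_, ?_⟩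
  · intro u hu; exact h1.1 u (by omega)
  · intro u hu; exact h1.2.2.2.1 a' h u hu
  · intro u hu; exact h1.2.2.2.2 a' h u hu
  · intro u hu w hw; exact h1.2.2.2.1 u (by omega) w hw
  · intro u hu w hw; exact h1.2.2.2.2 u (by omega) w hw

theorem reach_b {b c v : ℕ} (i : ℕ)
    (heq : ∀ j, i < j → v.testBit j = (b ^^^ c).testBit j)
    (hvi : v.testBit i ≠ (b ^^^ c).testBit i)
    (hbi : b.testBit i = true) :
    v ^^^ c < b ∧ (v ^^^ c) ^^^ c = v := by
  refine ⟨?_, xor_cancel_right v c⟩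
  apply Nat.lt_of_testBit i
  · rw [Nat.testBit_xor] at hvi ⊢
    revert hvi
    cases v.testBit i <;> cases c.testBit i <;> simp [hbi]
  · exact hbi
  · intro j hj
    have := heq j hj
    rw [Nat.testBit_xor] at this
    rw [Nat.testBit_xor, this]
    cases b.testBit j <;> cases c.testBit j <;> simp

theorem reach {b c v : ℕ} (hne : v ≠ b ^^^ c)
    (h : v < b ^^^ c ∨ ¬ IsGap b c v) :
    (∃ b' < b, b' ^^^ c = v) ∨ (∃ c' < c, b ^^^ c' = v) := by
  have hx : v ^^^ (b ^^^ c) ≠ 0 := by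
    intro h0
    exact hne (xor_eq_zero_iff.mp h0)
  obtain ⟨i, hi1, hi2⟩ := Nat.exists_most_significant_bit hx
  have heq : ∀ j, i < j → v.testBit j = (b ^^^ c).testBit j := by
    intro j hj
    have := hi2 j hj
    rw [Nat.testBit_xor] at this
    revert this
    cases v.testBit j <;> cases (b ^^^ c).testBit j <;> simp
  have hdi : v.testBit i ≠ (b ^^^ c).testBit i := by
    rw [Nat.testBit_xor] at hi1
    revert hi1
    cases v.testBit i <;> cases (b ^^^ c).testBit i <;> simp
  cases hvt : v.testBit i with
  | false =>
    have hsi : (b ^^^ c).testBit i = true := by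
      revert hdi; rw [hvt]; cases (b ^^^ c).testBit i <;> simp
    have hbc : b.testBit i = true ∨ c.testBit i = true := by
      rw [Nat.testBit_xor] at hsi
      revert hsi
      cases b.testBit i <;> cases c.testBit i <;> simp
    rcases hbc with hb | hc
    · obtain ⟨h1, h2⟩ := reach_b i heq hdi hb
      exact Or.inl ⟨v ^^^ c, h1, h2⟩
    · have heq' : ∀ j, i < j → v.testBit j = (c ^^^ b).testBit j := by
        intro j hj; rw [Nat.xor_comm c b]; exact heq j hj
      have hdi' : v.testBit i ≠ (c ^^^ b).testBit i := by
        rw [Nat.xor_comm c b]; exact hdi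
      obtain ⟨h1, h2⟩ := reach_b i heq' hdi' hc
      refine Or.inr ⟨v ^^^ b, h1, ?_⟩
      rw [Nat.xor_comm v b, xor_cancel_left]
  | true =>
    have hsi : (b ^^^ c).testBit i = false := by
      revert hdi; rw [hvt]; cases (b ^^^ c).testBit i <;> simp
    have hgt : ¬ v < b ^^^ c := by
      intro hlt
      have : b ^^^ c < v :=
        Nat.lt_of_testBit i hsi hvt (fun j hj => (heq j hj).symm)
      omega
    have hng : ¬ IsGap b c v := h.resolve_left hgt
    have hb : b.testBit i = true := by
      by_contra hb
      have hb' : b.testBit i = false := by revert hb; cases b.testBit i <;> simp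
      have hc' : c.testBit i = false := by
        rw [Nat.testBit_xor, hb'] at hsi
        revert hsi; cases c.testBit i <;> simp
      exact hng (Or.inr ⟨i, heq, hdi, hvt, hb', hc'⟩)
    obtain ⟨h1, h2⟩ := reach_b i heq hdi hb
    exact Or.inl ⟨v ^^^ c, h1, h2⟩

theorem N3_zero_aux : ∀ n b c, b + c ≤ n → N3 0 b c = b ^^^ c := by
  intro n
  induction n with
  | zero =>
    intro b c h
    have hb : b = 0 := by omega
    have hc : c = 0 := by omega
    subst hb; subst hc
    have h0 : N3 0 0 0 ≤ 0 := by
      apply N3_le_of_good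
      exact ⟨fun u hu => by omega, fun u hu => by omega, fun u hu => by omega,
        fun u hu => by omega, fun u hu => by omega⟩
    simpa using h0
  | succ n ih =>
    intro b c hbc
    apply le_antisymm
    · apply N3_le_of_good
      refine ⟨fun u hu => by omega, ?_, ?_, fun u hu => by omega, fun u hu => by omega⟩
      · intro b' hb'
        rw [ih b' c (by omega)]
        intro hcon
        have : b' = b := by
          have := congrArg (· ^^^ c) hcon
          simpa [xor_cancel_right] using this
        omega
      · intro c' hc'
        rw [ih b c' (by omega)]
        intro hcon
        have : c' = c := by
          have := congrArg (b ^^^ ·) hcon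
          simpa [xor_cancel_left] using this
        omega
    · by_contra hlt
      push_neg at hlt
      have hGood : Good 0 b c (N3 0 b c) := good_N3 0 b c
      have hne : N3 0 b c ≠ b ^^^ c := by omega
      rcases reach hne (Or.inl hlt) with ⟨b', hb', hbv⟩ | ⟨c', hc', hcv⟩
      · exact hGood.2.1 b' hb' (by rw [ih b' c (by omega)]; exact hbv)
      · exact hGood.2.2.1 c' hc' (by rw [ih b c' (by omega)]; exact hcv)

theorem N3_zero (b c : ℕ) : N3 0 b c = b ^^^ c :=
  N3_zero_aux (b + c) b c le_rfl

theorem isGap_xor (b c : ℕ) : IsGap b c (b ^^^ c) := Or.inl rfl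

theorem xor_le_of_isGap {b c m : ℕ} (h : IsGap b c m) : b ^^^ c ≤ m := by
  rcases h with rfl | ⟨i, h1, h2, h3, _, _⟩
  · exact le_rfl
  have hsi : (b ^^^ c).testBit i = false := by
    revert h2; rw [h3]; cases (b ^^^ c).testBit i <;> simp
  exact le_of_lt (Nat.lt_of_testBit i hsi h3 (fun j hj => (h1 j hj).symm))

theorem gap_infinite (b c : ℕ) : {x | IsGap b c x}.Infinite := by
  apply Set.infinite_of_forall_exists_gt
  intro n
  set i := b + c + n + 1 with hi
  have hb : b < 2 ^ i := lt_of_le_of_lt (by omega) (Nat.lt_two_pow_self (n := i))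
  have hc : c < 2 ^ i := lt_of_le_of_lt (by omega) (Nat.lt_two_pow_self (n := i))
  have hn : n < 2 ^ i := lt_of_le_of_lt (by omega) (Nat.lt_two_pow_self (n := i))
  have hbi : b.testBit i = false := Nat.testBit_eq_false_of_lt hb
  have hci : c.testBit i = false := Nat.testBit_eq_false_of_lt hc
  have hsi : (b ^^^ c).testBit i = false := by
    rw [Nat.testBit_xor, hbi, hci]; rfl
  refine ⟨(b ^^^ c) ||| 2 ^ i, ?_, ?_⟩
  · show IsGap b c _
    refine Or.inr ⟨i, ?_, ?_, ?_, hbi, hci⟩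
    · intro j hj
      have : (2 ^ i).testBit j = false := by
        simp [Nat.testBit_two_pow]; omega
      simp [Nat.testBit_or, this]
    · simp [Nat.testBit_or, Nat.testBit_two_pow, hsi]
    · simp [Nat.testBit_or, Nat.testBit_two_pow, hsi]
  · have h2 : ¬ ((b ^^^ c) ||| 2 ^ i) < 2 ^ i := by
      intro hlt
      have := Nat.testBit_eq_false_of_lt hlt
      simp [Nat.testBit_or, Nat.testBit_two_pow] at this
    omega

theorem main_bound (b c : ℕ) : ∀ a, Nat.nth (IsGap b c) a ≤ N3 a b c := by
  have hinf : {x | IsGap b c x}.Infinite := gap_infinite b c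
  have hsInf : IsGap b c (sInf (setOf (IsGap b c))) :=
    Nat.sInf_mem (s := setOf (IsGap b c)) ⟨_, isGap_xor b c⟩
  intro a
  induction a with
  | zero =>
    rw [N3_zero, Nat.nth_zero]
    exact Nat.sInf_le (isGap_xor b c)
  | succ a ih =>
    by_contra hlt
    push_neg at hlt
    have hmono : N3 a b c < N3 (a + 1) b c := N3_mono (by omega)
    have h1 : Nat.nth (IsGap b c) a < N3 (a + 1) b c := lt_of_le_of_lt ih hmono
    have hng : ¬ IsGap b c (N3 (a + 1) b c) := by
      intro hg
      classical
      have hnc := Nat.nth_count (p := IsGap b c) hg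
      have hk1 : a < Nat.count (IsGap b c) (N3 (a + 1) b c) := by
        rw [← hnc] at h1; exact (Nat.nth_lt_nth hinf).mp h1
      have hk2 : Nat.count (IsGap b c) (N3 (a + 1) b c) < a + 1 := by
        rw [← hnc] at hlt; exact (Nat.nth_lt_nth hinf).mp hlt
      omega
    have hs : b ^^^ c < N3 (a + 1) b c := by
      have h0 : Nat.nth (IsGap b c) 0 ≤ Nat.nth (IsGap b c) a :=
        Nat.nth_monotone hinf (by omega)
      rw [Nat.nth_zero] at h0
      have := xor_le_of_isGap hsInf
      have h0' : sInf (setOf (IsGap b c)) ≤ Nat.nth (IsGap b c) a := h0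
      omega
    have hGood : Good (a + 1) b c (N3 (a + 1) b c) := good_N3 (a + 1) b c
    rcases reach (by omega) (Or.inr hng) with ⟨b', hb', hbv⟩ | ⟨c', hc', hcv⟩
    · exact hGood.2.2.2.1 0 (by omega) b' hb' (by rw [N3_zero]; exact hbv)
    · exact hGood.2.2.2.2 0 (by omega) c' hc' (by rw [N3_zero]; exact hcv)

/-- If `m` is the `j`-th gap in `b ⊕ c` (`j ≥ 1`, i.e. the `(j-1)`-st smallest
element, 0-indexed, of the infinite set of gaps), then `N(j-1, b, c) ≥ m`. -/
theorem gap_lower_bound (b c j m : ℕ) (hj : 1 ≤ j)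
    (hm : m = Nat.nth (fun x => IsGap b c x) (j - 1)) :
    m ≤ N3 (j - 1) b c := by
  subst hm
  exact main_bound b c (j - 1)
end

section
/- Let x₂, …, xₙ be natural numbers and S = x₂ + ⋯ + xₙ. Then for every x₁ ≥ S(S+1)/2, N(x₁, x₂, …, xₙ) = x₁ + S. In particular, the least threshold A(x₂, …, xₙ) (the least x₁ such that N(x₁, x₂, …, xₙ) = x₁ + S) is well-defined and is bounded above by a quadratic function of S. -/
lemma sum_update_lt {n : ℕ} (x : Fin n → ℕ) (i : Fin n) (v : ℕ) (h : v < x i) :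
    (∑ j, Function.update x i v j) < ∑ j, x j := by
  apply Finset.sum_lt_sum
  · intro j _
    rcases eq_or_ne j i with rfl | hj
    · simpa using h.le
    · simp [Function.update_of_ne hj]
  · exact ⟨i, Finset.mem_univ i, by simpa using h⟩

/-- Sprague–Grundy value of the Auxiliary Nim game
`(*a) ⊞ ((*x 0) ⊕ ⋯ ⊕ (*x (n-1)))`, where `x : Fin n → ℕ` lists the piles
`x₂, …, xₙ` and `a` is the auxiliary pile `x₁`.  It is the mex of the
Sprague–Grundy values of the one-move successors: strictly decrease `a`,
or strictly decrease exactly one of the piles `x i`, or do both. -/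
noncomputable def NAux {n : ℕ} (a : ℕ) (x : Fin n → ℕ) : ℕ :=
  sInf {m : ℕ |
    (∀ a', a' < a → NAux a' x ≠ m) ∧
    (∀ (i : Fin n) (v : ℕ), v < x i → NAux a (Function.update x i v) ≠ m) ∧
    (∀ a', a' < a → ∀ (i : Fin n) (v : ℕ), v < x i →
      NAux a' (Function.update x i v) ≠ m)}
termination_by a + ∑ j, x j
decreasing_by
  · exact Nat.add_lt_add_right ‹_› _
  · exact Nat.add_lt_add_left (sum_update_lt x i v ‹_›) a
  · exact Nat.add_lt_add ‹_› (sum_update_lt x i v ‹_›)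

/-- The defining successor-avoidance set of `NAux`. -/
def NSet {n : ℕ} (a : ℕ) (x : Fin n → ℕ) : Set ℕ :=
  {m : ℕ |
    (∀ a', a' < a → NAux a' x ≠ m) ∧
    (∀ (i : Fin n) (v : ℕ), v < x i → NAux a (Function.update x i v) ≠ m) ∧
    (∀ a', a' < a → ∀ (i : Fin n) (v : ℕ), v < x i →
      NAux a' (Function.update x i v) ≠ m)}

lemma NAux_eq_sInf {n : ℕ} (a : ℕ) (x : Fin n → ℕ) : NAux a x = sInf (NSet a x) := by
  rw [NAux]; rfl

lemma NAux_le {n : ℕ} (a : ℕ) (x : Fin n → ℕ) : NAux a x ≤ a + ∑ i, x i := by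
  rw [NAux]
  refine Nat.sInf_le ⟨?_, ?_, ?_⟩
  · intro a' h
    exact ((NAux_le a' x).trans_lt (by omega)).ne
  · intro i v hv
    exact ((NAux_le a _).trans_lt (by have := sum_update_lt x i v hv; omega)).ne
  · intro a' h i v hv
    exact ((NAux_le a' _).trans_lt (by have := sum_update_lt x i v hv; omega)).ne
termination_by a + ∑ j, x j
decreasing_by
  · exact Nat.add_lt_add_right ‹_› _
  · exact Nat.add_lt_add_left (sum_update_lt x i v ‹_›) a
  · exact Nat.add_lt_add ‹_› (sum_update_lt x i v ‹_›)

lemma mem_NSet {n : ℕ} (a : ℕ) (x : Fin n → ℕ) : (a + ∑ i, x i) ∈ NSet a x := by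
  refine ⟨?_, ?_, ?_⟩
  · intro a' h
    exact ((NAux_le a' x).trans_lt (by omega)).ne
  · intro i v hv
    exact ((NAux_le a _).trans_lt (by have := sum_update_lt x i v hv; omega)).ne
  · intro a' h i v hv
    exact ((NAux_le a' _).trans_lt (by have := sum_update_lt x i v hv; omega)).ne

lemma NAux_mem {n : ℕ} (a : ℕ) (x : Fin n → ℕ) : NAux a x ∈ NSet a x := by
  rw [NAux_eq_sInf]
  exact Nat.sInf_mem ⟨_, mem_NSet a x⟩

/-- injectivity in the auxiliary pile -/
lemma NAux_ne {n : ℕ} {a a' : ℕ} (x : Fin n → ℕ) (h : a' < a) : NAux a' x ≠ NAux a x :=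
  (NAux_mem a x).1 a' h

lemma NAux_ne_update {n : ℕ} {a : ℕ} {x : Fin n → ℕ} {i : Fin n} {v : ℕ} (hv : v < x i) :
    NAux a (Function.update x i v) ≠ NAux a x :=
  (NAux_mem a x).2.1 i v hv

lemma NAux_ne_update' {n : ℕ} {a a' : ℕ} {x : Fin n → ℕ} {i : Fin n} {v : ℕ}
    (h : a' < a) (hv : v < x i) : NAux a' (Function.update x i v) ≠ NAux a x :=
  (NAux_mem a x).2.2 a' h i v hv

/-- mex property: everything below the value is realized at a one-move successor -/
lemma realized_of_lt {n : ℕ} {a m : ℕ} {x : Fin n → ℕ} (h : m < NAux a x) :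
    (∃ a' < a, NAux a' x = m) ∨
    (∃ i : Fin n, ∃ v < x i, NAux a (Function.update x i v) = m) ∨
    (∃ a' < a, ∃ i : Fin n, ∃ v < x i, NAux a' (Function.update x i v) = m) := by
  have hm : m ∉ NSet a x := Nat.notMem_of_lt_sInf (by rwa [NAux_eq_sInf] at h)
  by_contra hc
  push_neg at hc
  exact hm ⟨fun a' ha' => hc.1 a' ha', fun i v hv => hc.2.1 i v hv,
    fun a' ha' i v hv => hc.2.2 a' ha' i v hv⟩

lemma sInf_eq_of {S : Set ℕ} {k : ℕ} (hk : k ∈ S) (h : ∀ m < k, m ∉ S) : sInf S = k := by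
  have h1 : sInf S ≤ k := Nat.sInf_le hk
  have h2 : sInf S ∈ S := Nat.sInf_mem ⟨k, hk⟩
  rcases lt_or_eq_of_le h1 with h3 | h3
  · exact absurd h2 (h _ h3)
  · exact h3

lemma sum_update_add {n : ℕ} (x : Fin n → ℕ) (i : Fin n) (v : ℕ) :
    (∑ j, Function.update x i v j) + x i = (∑ j, x j) + v := by
  rw [Finset.sum_update_of_mem (Finset.mem_univ i), Finset.sdiff_singleton_eq_erase]
  have : ∑ j, x j = x i + ∑ j ∈ Finset.univ.erase i, x j :=
    (Finset.add_sum_erase _ _ (Finset.mem_univ i)).symm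
  omega

lemma tri_succ (s : ℕ) : (s + 1) * (s + 2) / 2 = s * (s + 1) / 2 + (s + 1) := by
  obtain ⟨k, hk⟩ := (Nat.even_mul_succ_self s).two_dvd
  have h2 : (s + 1) * (s + 2) = 2 * (k + (s + 1)) := by
    have : (s + 1) * (s + 2) = s * (s + 1) + 2 * (s + 1) := by ring
    omega
  rw [hk, h2]
  omega

/-- Pure auxiliary heap: value is the heap size. -/
lemma NAux_of_sum_zero {n : ℕ} (x : Fin n → ℕ) (hx : ∑ i, x i = 0) (a : ℕ) :
    NAux a x = a := by
  induction a using Nat.strong_induction_on with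
  | _ a ih =>
    have hxi : ∀ i, x i = 0 := by
      intro i
      have h := Finset.single_le_sum (f := x) (fun j _ => Nat.zero_le _) (Finset.mem_univ i)
      omega
    rw [NAux_eq_sInf]
    apply sInf_eq_of
    · refine ⟨?_, ?_, ?_⟩
      · intro a' h
        rw [ih a' h]; omega
      · intro i v hv
        exact absurd hv (by simp [hxi i])
      · intro a' h i v hv
        exact absurd hv (by simp [hxi i])
    · intro m hm hmem
      exact hmem.1 m hm (ih m hm)

/-- once the value reaches `a + S`, it stays at `a + S` -/
lemma NAux_step {n : ℕ} (x : Fin n → ℕ) (c : ℕ) (h : NAux c x = c + ∑ i, x i) :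
    NAux (c + 1) x = (c + 1) + ∑ i, x i := by
  rw [NAux_eq_sInf]
  apply sInf_eq_of
  · refine ⟨?_, ?_, ?_⟩
    · intro a' ha'
      have := NAux_le a' x; omega
    · intro i v hv
      have h1 := NAux_le (c + 1) (Function.update x i v)
      have h2 := sum_update_lt x i v hv
      omega
    · intro a' ha' i v hv
      have h1 := NAux_le a' (Function.update x i v)
      have h2 := sum_update_lt x i v hv
      omega
  · intro m hm hmem
    rcases eq_or_lt_of_le (Nat.le_of_lt_succ (by omega : m < (c + ∑ i, x i) + 1)) with
      heq | hlt
    · exact hmem.1 c (by omega) (by rw [h, heq])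
    · rcases realized_of_lt (h ▸ hlt) with ⟨b, hb, he⟩ | ⟨i, v, hv, he⟩ |
        ⟨b, hb, i, v, hv, he⟩
      · exact hmem.1 b (by omega) he
      · exact hmem.2.2 c (by omega) i v hv he
      · exact hmem.2.2 b (by omega) i v hv he

lemma NAux_propagate {n : ℕ} (x : Fin n → ℕ) {c : ℕ} (h : NAux c x = c + ∑ i, x i) :
    ∀ a, c ≤ a → NAux a x = a + ∑ i, x i := by
  intro a ha
  induction a, ha using Nat.le_induction with
  | base => exact h
  | succ a ha ih => exact NAux_step x a ih

/-- dichotomy: knowing the decremented position has settled beyond `t`,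
the value at `c` is either already `c + S` or small. -/
lemma NAux_dichotomy {n : ℕ} (x : Fin n → ℕ) (i : Fin n) (hi : 1 ≤ x i) (t : ℕ)
    (hy : ∀ b, t ≤ b →
      NAux b (Function.update x i (x i - 1)) = b + ((∑ j, x j) - 1)) (c : ℕ) :
    NAux c x = c + ∑ j, x j ∨ NAux c x < t + ((∑ j, x j) - 1) := by
  have hSi : x i ≤ ∑ j, x j :=
    Finset.single_le_sum (fun j _ => Nat.zero_le _) (Finset.mem_univ i)
  have hvlt : x i - 1 < x i := by omega
  have hN := NAux_le c x
  by_cases hcase : NAux c x < t + ((∑ j, x j) - 1)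
  · exact Or.inr hcase
  left
  push_neg at hcase
  have hble : ¬ (NAux c x - ((∑ j, x j) - 1)) ≤ c := by
    intro hbc
    set b := NAux c x - ((∑ j, x j) - 1) with hbdef
    have hbt : t ≤ b := by omega
    have heq : NAux b (Function.update x i (x i - 1)) = NAux c x := by
      rw [hy b hbt]; omega
    rcases eq_or_lt_of_le hbc with heqb | hltb
    · exact NAux_ne_update hvlt (heqb ▸ heq)
    · exact NAux_ne_update' hltb hvlt heq
  omega

/-- pigeonhole: some `c` below the triangular threshold already has value `c + S` -/
lemma NAux_exists_settle {n : ℕ} (x : Fin n → ℕ) (i : Fin n) (hi : 1 ≤ x i)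
    (hy : ∀ b, (((∑ j, x j) - 1) * ∑ j, x j) / 2 ≤ b →
      NAux b (Function.update x i (x i - 1)) = b + ((∑ j, x j) - 1)) :
    ∃ c < (∑ j, x j) * ((∑ j, x j) + 1) / 2, NAux c x = c + ∑ j, x j := by
  set S := ∑ j, x j with hS
  have hSpos : 1 ≤ S := le_trans hi
    (Finset.single_le_sum (fun j _ => Nat.zero_le _) (Finset.mem_univ i))
  set t := ((S - 1) * S) / 2 with ht
  set T := S * (S + 1) / 2 with hT
  have hTt : T = t + S := by
    obtain ⟨s, hs⟩ : ∃ s, S = s + 1 := ⟨S - 1, by omega⟩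
    rw [hT, ht, hs]
    simpa using tri_succ s
  by_contra hc
  push_neg at hc
  have hall : ∀ c < T, NAux c x < T - 1 := by
    intro c hcT
    rcases NAux_dichotomy x i hi t (fun b hb => hy b hb) c with h1 | h1
    · exact absurd h1 (hc c hcT)
    · omega
  have hmaps : ∀ c ∈ Finset.range T, NAux c x ∈ Finset.range (T - 1) := by
    intro c hcmem
    exact Finset.mem_range.mpr (hall c (Finset.mem_range.mp hcmem))
  have hinj : Set.InjOn (fun c => NAux c x) (Finset.range T) := by
    intro a ha b hb hab
    by_contra hne
    rcases lt_or_gt_of_ne hne with hlt | hlt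
    · exact NAux_ne x hlt hab
    · exact NAux_ne x hlt hab.symm
  have hcard := Finset.card_le_card_of_injOn (fun c => NAux c x) hmaps hinj
  simp only [Finset.card_range] at hcard
  have hT1 : 1 ≤ T := by
    rw [hT]
    have : 1 * 2 / 2 ≤ S * (S + 1) / 2 := Nat.div_le_div_right
      (by nlinarith)
    omega
  omega

lemma NAux_key : ∀ (S : ℕ) {n : ℕ} (x : Fin n → ℕ), ∑ i, x i = S →
    ∀ a, S * (S + 1) / 2 ≤ a → NAux a x = a + S := by
  intro S
  induction S using Nat.strong_induction_on with
  | _ S ih =>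
    intro n x hS a ha
    rcases Nat.eq_zero_or_pos S with rfl | hpos
    · rw [NAux_of_sum_zero x hS a]; omega
    · obtain ⟨i, hi⟩ : ∃ i, x i ≠ 0 := by
        by_contra hcon
        push_neg at hcon
        rw [Finset.sum_congr rfl (fun j _ => hcon j)] at hS
        simp at hS
        omega
      have hi1 : 1 ≤ x i := by omega
      have hSi : x i ≤ S := hS ▸
        Finset.single_le_sum (f := x) (fun j _ => Nat.zero_le _) (Finset.mem_univ i)
      have hsumy : ∑ j, Function.update x i (x i - 1) j = S - 1 := by
        have := sum_update_add x i (x i - 1)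
        omega
      have hy : ∀ b, (((∑ j, x j) - 1) * ∑ j, x j) / 2 ≤ b →
          NAux b (Function.update x i (x i - 1)) = b + ((∑ j, x j) - 1) := by
        intro b hb
        rw [hS] at hb ⊢
        exact ih (S - 1) (by omega) _ hsumy b (by
          have : (S - 1) * ((S - 1) + 1) = (S - 1) * S := by
            congr 1
            omega
          omega)
      obtain ⟨c, hcT, hceq⟩ := NAux_exists_settle x i hi1 hy
      rw [hS] at hcT hceq
      have := NAux_propagate x (hS ▸ hceq) a (by omega)
      rw [hS] at this
      exact this

/-- With `S = x₂ + ⋯ + xₙ`, for every `x₁ ≥ S(S+1)/2` one has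
`N(x₁, x₂, …, xₙ) = x₁ + S`; in particular the least threshold
`A(x₂, …, xₙ)` is well-defined and bounded above by the quadratic
`S(S+1)/2`. -/
theorem AAux_quadratic_bound {n : ℕ} (hn : 1 ≤ n) (x : Fin n → ℕ) :
    (∀ x₁ : ℕ, (∑ i, x i) * ((∑ i, x i) + 1) / 2 ≤ x₁ →
      NAux x₁ x = x₁ + ∑ i, x i) ∧
    {x₁ : ℕ | NAux x₁ x = x₁ + ∑ i, x i}.Nonempty ∧
    sInf {x₁ : ℕ | NAux x₁ x = x₁ + ∑ i, x i} ≤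
      (∑ i, x i) * ((∑ i, x i) + 1) / 2 := by
  have hkey : ∀ x₁ : ℕ, (∑ i, x i) * ((∑ i, x i) + 1) / 2 ≤ x₁ →
      NAux x₁ x = x₁ + ∑ i, x i := fun x₁ h => NAux_key (∑ i, x i) x rfl x₁ h
  have hmem : (∑ i, x i) * ((∑ i, x i) + 1) / 2 ∈
      {x₁ : ℕ | NAux x₁ x = x₁ + ∑ i, x i} := hkey _ le_rfl
  exact ⟨hkey, ⟨_, hmem⟩, Nat.sInf_le hmem⟩
end
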